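/- Let μ_C be the Cantor measure on [0,1) (the unique Borel probability measure with ∫ f dμ_C = (1/2) ∫ ( f(x/3) + f((x+2)/3) ) dμ_C(x) for all bounded continuous f), and let r : [0,1) → [0,1) be r(x) = 3x mod 1. Then μ_C is invariant under r (the pushforward of μ_C under r equals μ_C), but μ_C is not strongly invariant for r: the identity ∫ f dμ = (1/3) ∫ Σ_{k=0}^{2} f((x+k)/3) dμ(x) fails for μ = μ_C and some bounded measurable f. -/

import Mathlib

open MeasureTheory

/-- The map `x ↦ N·x mod 1` on `[0,1)`. -/
noncomputable def modMap (N : ℕ) (x : Set.Ico (0:ℝ) 1) : Set.Ico (0:ℝ) 1 :=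
  ⟨Int.fract ((N : ℝ) * x), Int.fract_nonneg _, Int.fract_lt_one _⟩

/-- The `k`-th inverse branch `x ↦ (x + k)/N` of `x ↦ N·x mod 1` on `[0,1)`
(for `k < N` the value `(x+k)/N` already lies in `[0,1)`, so taking the fractional
part does not change it). -/
noncomputable def branchMap (N k : ℕ) (x : Set.Ico (0:ℝ) 1) : Set.Ico (0:ℝ) 1 :=
  ⟨Int.fract (((x : ℝ) + k) / N), Int.fract_nonneg _, Int.fract_lt_one _⟩

lemma branch_coe (k : ℕ) (hk : k < 3) (x : Set.Ico (0:ℝ) 1) :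
    (branchMap 3 k x : ℝ) = ((x : ℝ) + k) / 3 := by
  have h0 : (0:ℝ) ≤ (x:ℝ) := x.2.1
  have h1 : (x:ℝ) < 1 := x.2.2
  have hk' : (k:ℝ) ≤ 2 := by exact_mod_cast Nat.lt_succ_iff.mp hk
  have hk0 : (0:ℝ) ≤ (k:ℝ) := Nat.cast_nonneg k
  simp only [branchMap, Nat.cast_ofNat]
  exact Int.fract_eq_self.mpr
    ⟨div_nonneg (by linarith) (by norm_num), (div_lt_one (by norm_num)).mpr (by linarith)⟩

lemma branch_cont (k : ℕ) (hk : k < 3) : Continuous (branchMap 3 k) := by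
  rw [continuous_induced_rng]
  have : (fun x : Set.Ico (0:ℝ) 1 => ((branchMap 3 k x : ℝ))) =
      fun x : Set.Ico (0:ℝ) 1 => ((x : ℝ) + k) / 3 := funext (branch_coe k hk)
  show Continuous fun x : Set.Ico (0:ℝ) 1 => ((branchMap 3 k x : ℝ))
  rw [this]
  fun_prop

lemma branch_meas (k : ℕ) (hk : k < 3) : Measurable (branchMap 3 k) :=
  (branch_cont k hk).measurable

lemma modMap_meas : Measurable (modMap 3) :=
  Measurable.subtype_mk ((measurable_const.mul measurable_subtype_coe).fract)

lemma modMap_branch (k : ℕ) (hk : k < 3) (x : Set.Ico (0:ℝ) 1) :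
    modMap 3 (branchMap 3 k x) = x := by
  apply Subtype.ext
  show Int.fract (((3:ℕ) : ℝ) * (branchMap 3 k x : ℝ)) = (x:ℝ)
  rw [branch_coe k hk]
  have h3 : ((3:ℕ) : ℝ) * (((x:ℝ) + k) / 3) = (x:ℝ) + k := by push_cast; ring
  rw [h3]
  rw [Int.fract_add_natCast]
  exact Int.fract_eq_self.mpr x.2

theorem cantor_measure_invariant_not_strongly_invariant
    (μC : Measure (Set.Ico (0:ℝ) 1)) [IsProbabilityMeasure μC]
    (hμC : ∀ f : Set.Ico (0:ℝ) 1 → ℂ, Continuous f → (∃ C, ∀ x, ‖f x‖ ≤ C) →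
      ∫ x, f x ∂μC
        = (2 : ℂ)⁻¹ * ∫ x, (f (branchMap 3 0 x) + f (branchMap 3 2 x)) ∂μC) :
    Measure.map (modMap 3) μC = μC ∧
    ∃ f : Set.Ico (0:ℝ) 1 → ℂ, Measurable f ∧ (∃ C, ∀ x, ‖f x‖ ≤ C) ∧
      ∫ x, f x ∂μC
        ≠ (3 : ℂ)⁻¹ * ∫ x, ∑ k ∈ Finset.range 3, f (branchMap 3 k x) ∂μC := by
  -- integrability of bounded continuous functions
  have hint : ∀ g : (Set.Ico (0:ℝ) 1) → ℝ, Continuous g → (∃ C, ∀ x, |g x| ≤ C) → Integrable g μC := by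
    rintro g hc ⟨C, hC⟩
    exact ⟨hc.aestronglyMeasurable,
      HasFiniteIntegral.of_bounded (C := C) (Filter.Eventually.of_forall hC)⟩
  -- the real-valued self-similarity identity
  have real_id : ∀ g : (Set.Ico (0:ℝ) 1) → ℝ, Continuous g → (∃ C, ∀ x, |g x| ≤ C) →
      ∫ x, g x ∂μC = 2⁻¹ * (∫ x, g (branchMap 3 0 x) ∂μC + ∫ x, g (branchMap 3 2 x) ∂μC) := by
    rintro g hc hb
    obtain ⟨C, hC⟩ := hb
    have h := hμC (fun x => (g x : ℂ)) (Complex.continuous_ofReal.comp hc)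
      ⟨C, fun x => by simpa using hC x⟩
    have e1 : ∫ x, ((g x : ℂ)) ∂μC = ((∫ x, g x ∂μC : ℝ) : ℂ) := _root_.integral_ofReal
    have e2 : ∫ x, ((g (branchMap 3 0 x) : ℂ) + (g (branchMap 3 2 x) : ℂ)) ∂μC
        = ((∫ x, (g (branchMap 3 0 x) + g (branchMap 3 2 x)) ∂μC : ℝ) : ℂ) := by
      have ee : (fun x => (((g (branchMap 3 0 x) + g (branchMap 3 2 x) : ℝ)) : ℂ))
          = fun x => ((g (branchMap 3 0 x) : ℂ) + (g (branchMap 3 2 x) : ℂ)) := by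
        funext x; push_cast; ring
      rw [← ee]
      exact _root_.integral_ofReal
    rw [e1, e2] at h
    have h' : (∫ x, g x ∂μC : ℝ)
        = 2⁻¹ * ∫ x, (g (branchMap 3 0 x) + g (branchMap 3 2 x)) ∂μC := by
      have := h
      rw [show ((2:ℂ))⁻¹ * ((∫ x, (g (branchMap 3 0 x) + g (branchMap 3 2 x)) ∂μC : ℝ) : ℂ)
        = (((2⁻¹ * ∫ x, (g (branchMap 3 0 x) + g (branchMap 3 2 x)) ∂μC : ℝ)) : ℂ) by
          push_cast; ring] at this
      exact_mod_cast this
    have i0 : Integrable (fun x => g (branchMap 3 0 x)) μC :=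
      hint _ (hc.comp (branch_cont 0 (by norm_num))) ⟨C, fun x => hC _⟩
    have i2 : Integrable (fun x => g (branchMap 3 2 x)) μC :=
      hint _ (hc.comp (branch_cont 2 (by norm_num))) ⟨C, fun x => hC _⟩
    rw [h', integral_add i0 i2]
  -- the measure identity
  have measure_id : μC = (2:ENNReal)⁻¹ •
      (Measure.map (branchMap 3 0) μC + Measure.map (branchMap 3 2) μC) := by
    apply ext_of_forall_lintegral_eq_of_IsFiniteMeasure
    intro f
    have fm : Measurable fun x : (Set.Ico (0:ℝ) 1) => ((f x : ENNReal)) :=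
      f.continuous.measurable.coe_nnreal_ennreal
    have hcr : Continuous fun x : (Set.Ico (0:ℝ) 1) => ((f x : ℝ)) :=
      NNReal.continuous_coe.comp f.continuous
    obtain ⟨C, hC⟩ := f.bounded
    have x0 : (Set.Ico (0:ℝ) 1) := ⟨0, le_refl 0, zero_lt_one⟩
    have hb : ∃ C', ∀ x : (Set.Ico (0:ℝ) 1), |((f x : ℝ))| ≤ C' := by
      refine ⟨C + (f x0 : ℝ), fun x => ?_⟩
      have h1 := hC x x0
      rw [NNReal.dist_eq] at h1
      have h2 : (0:ℝ) ≤ (f x : ℝ) := (f x).coe_nonneg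
      have h3 : (0:ℝ) ≤ (f x0 : ℝ) := (f x0).coe_nonneg
      rw [abs_of_nonneg h2]
      have := abs_sub_abs_le_abs_sub ((f x : ℝ)) ((f x0 : ℝ))
      rw [abs_of_nonneg h2, abs_of_nonneg h3] at this
      linarith
    have hb0 : ∃ C', ∀ x : (Set.Ico (0:ℝ) 1), |((f (branchMap 3 0 x) : ℝ))| ≤ C' :=
      hb.imp fun C' h x => h _
    have hb2 : ∃ C', ∀ x : (Set.Ico (0:ℝ) 1), |((f (branchMap 3 2 x) : ℝ))| ≤ C' :=
      hb.imp fun C' h x => h _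
    have i : Integrable (fun x => ((f x : ℝ))) μC := hint _ hcr hb
    have i0 : Integrable (fun x => ((f (branchMap 3 0 x) : ℝ))) μC :=
      hint _ (hcr.comp (branch_cont 0 (by norm_num))) hb0
    have i2 : Integrable (fun x => ((f (branchMap 3 2 x) : ℝ))) μC :=
      hint _ (hcr.comp (branch_cont 2 (by norm_num))) hb2
    have l : ∫⁻ x, (f x : ENNReal) ∂μC = ENNReal.ofReal (∫ x, ((f x : ℝ)) ∂μC) :=
      lintegral_coe_eq_integral _ i
    have l0 : ∫⁻ x, (f (branchMap 3 0 x) : ENNReal) ∂μC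
        = ENNReal.ofReal (∫ x, ((f (branchMap 3 0 x) : ℝ)) ∂μC) :=
      lintegral_coe_eq_integral _ i0
    have l2 : ∫⁻ x, (f (branchMap 3 2 x) : ENNReal) ∂μC
        = ENNReal.ofReal (∫ x, ((f (branchMap 3 2 x) : ℝ)) ∂μC) :=
      lintegral_coe_eq_integral _ i2
    rw [lintegral_smul_measure, lintegral_add_measure,
      lintegral_map fm (branch_meas 0 (by norm_num)),
      lintegral_map fm (branch_meas 2 (by norm_num)), l, l0, l2,
      real_id _ hcr hb,
      ENNReal.ofReal_mul (by norm_num),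
      ENNReal.ofReal_add (integral_nonneg fun x => (f _).coe_nonneg)
        (integral_nonneg fun x => (f _).coe_nonneg)]
    congr 1
    rw [ENNReal.ofReal_inv_of_pos (by norm_num)]
    norm_num
  -- Part 1: invariance
  have part1 : Measure.map (modMap 3) μC = μC := by
    conv_lhs => rw [measure_id]
    rw [Measure.map_smul,
      Measure.map_add _ _ modMap_meas,
      Measure.map_map modMap_meas (branch_meas 0 (by norm_num)),
      Measure.map_map modMap_meas (branch_meas 2 (by norm_num))]
    have e0 : modMap 3 ∘ branchMap 3 0 = id := funext (modMap_branch 0 (by norm_num))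
    have e2 : modMap 3 ∘ branchMap 3 2 = id := funext (modMap_branch 2 (by norm_num))
    rw [e0, e2, Measure.map_id, ← two_smul ENNReal μC, smul_smul,
      ENNReal.inv_mul_cancel two_ne_zero ENNReal.ofNat_ne_top, one_smul]
  refine ⟨part1, ?_⟩
  -- Part 2: the middle third has μC-measure zero
  set S : Set (Set.Ico (0:ℝ) 1) :=
    (fun x : (Set.Ico (0:ℝ) 1) => (x : ℝ)) ⁻¹' Set.Ico (1/3) (2/3) with hSdef
  have hS : MeasurableSet S := measurable_subtype_coe measurableSet_Ico
  have hS0 : μC S = 0 := by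
    have h := congrArg (fun m : Measure (Set.Ico (0:ℝ) 1) => m S) measure_id
    simp only [Measure.smul_apply, Measure.coe_add, Pi.add_apply, smul_eq_mul] at h
    rw [Measure.map_apply (branch_meas 0 (by norm_num)) hS,
      Measure.map_apply (branch_meas 2 (by norm_num)) hS] at h
    have e0 : branchMap 3 0 ⁻¹' S = ∅ := by
      ext x
      simp only [Set.mem_preimage, Set.mem_empty_iff_false, iff_false, hSdef,
        Set.mem_Ico]
      rw [branch_coe 0 (by norm_num)]
      push_cast
      intro hx
      have := x.2.2
      linarith [hx.1]
    have e2 : branchMap 3 2 ⁻¹' S = ∅ := by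
      ext x
      simp only [Set.mem_preimage, Set.mem_empty_iff_false, iff_false, hSdef,
        Set.mem_Ico]
      rw [branch_coe 2 (by norm_num)]
      push_cast
      intro hx
      have := x.2.1
      linarith [hx.2]
    rw [e0, e2] at h
    simpa using h
  -- the counterexample function
  refine ⟨S.indicator (fun _ => (1:ℂ)), (measurable_const.indicator hS), ⟨1, fun x => ?_⟩, ?_⟩
  · by_cases hx : x ∈ S
    · simp [Set.indicator_of_mem hx]
    · simp [Set.indicator_of_notMem hx]
  · -- LHS is 0
    have lhs0 : ∫ x, S.indicator (fun _ => (1:ℂ)) x ∂μC = 0 := by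
      rw [integral_indicator_const (1:ℂ) hS, measureReal_def, hS0]
      simp
    -- the summed integrand is identically 1
    have hsum : ∀ x : (Set.Ico (0:ℝ) 1),
        ∑ k ∈ Finset.range 3, S.indicator (fun _ => (1:ℂ)) (branchMap 3 k x) = 1 := by
      intro x
      have hx0 : (0:ℝ) ≤ (x:ℝ) := x.2.1
      have hx1 : (x:ℝ) < 1 := x.2.2
      have m0 : branchMap 3 0 x ∉ S := by
        simp only [hSdef, Set.mem_preimage, Set.mem_Ico, not_and_or, not_le]
        left
        rw [branch_coe 0 (by norm_num)]
        push_cast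
        linarith
      have m1 : branchMap 3 1 x ∈ S := by
        simp only [hSdef, Set.mem_preimage, Set.mem_Ico]
        rw [branch_coe 1 (by norm_num)]
        push_cast
        constructor <;> [linarith; linarith]
      have m2 : branchMap 3 2 x ∉ S := by
        simp only [hSdef, Set.mem_preimage, Set.mem_Ico, not_and_or, not_lt]
        right
        rw [branch_coe 2 (by norm_num)]
        push_cast
        linarith
      rw [Finset.sum_range_succ, Finset.sum_range_succ, Finset.sum_range_one,
        Set.indicator_of_notMem m0, Set.indicator_of_mem m1, Set.indicator_of_notMem m2]
      simp
    have rhs1 : ∫ x, ∑ k ∈ Finset.range 3,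
        S.indicator (fun _ => (1:ℂ)) (branchMap 3 k x) ∂μC = 1 := by
      simp only [hsum]
      simp
    rw [lhs0, rhs1]
    norm_num
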